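/- Let I be an ideal of R. If the left regular module R is I-supplemented and R is a left PSD ring for I, then every finitely generated left R-module is I-supplemented. -/

import Mathlib

open Submodule Function

/-- A submodule `N` of `M` is PSD in `M` if whenever `N + X = M`, there is a
projective direct summand `S` of `M` with `S ≤ N` and `M = S ⊕ X`. -/
def IsPSD (R : Type*) [Ring R] {M : Type*} [AddCommGroup M] [Module R M]
    (N : Submodule R M) : Prop :=
  ∀ X : Submodule R M, N ⊔ X = ⊤ →
    ∃ S : Submodule R M, S ≤ N ∧ Module.Projective R ↥S ∧ IsCompl S X

/-- `N` is small in `M`: `N + L = M` implies `L = M`. -/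
def IsSmallSub (R : Type*) [Ring R] {M : Type*} [AddCommGroup M] [Module R M]
    (N : Submodule R M) : Prop :=
  ∀ L : Submodule R M, N ⊔ L = ⊤ → L = ⊤

/-- The (Jacobson) radical of a module: intersection of all maximal submodules. -/
def radM (R M : Type*) [Ring R] [AddCommGroup M] [Module R M] : Submodule R M :=
  sInf {m : Submodule R M | IsCoatom m}

/-- `M` is supplemented: every submodule `X` has a submodule `Y` with `X + Y = M`
and `X ∩ Y` small in `Y`. -/
def IsSupplemented (R M : Type*) [Ring R] [AddCommGroup M] [Module R M] : Prop :=
  ∀ X : Submodule R M, ∃ Y : Submodule R M, X ⊔ Y = ⊤ ∧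
    IsSmallSub R (Submodule.comap Y.subtype X)

/-- `M` is lifting: every submodule `N` admits a decomposition `M = A ⊕ B` with
`A ≤ N` and `N ∩ B` small in `B`. -/
def IsLifting (R M : Type*) [Ring R] [AddCommGroup M] [Module R M] : Prop :=
  ∀ N : Submodule R M, ∃ A B : Submodule R M, IsCompl A B ∧ A ≤ N ∧
    IsSmallSub R (Submodule.comap B.subtype N)

/-- `Y` is an `I`-supplement of `X` in `M`: `X + Y = M`, `X ∩ Y ⊆ IY`, and
`X ∩ Y` is PSD in `Y`. -/
def IsISupplementOf {R : Type*} [Ring R] {M : Type*} [AddCommGroup M] [Module R M]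
    (I : Ideal R) (Y X : Submodule R M) : Prop :=
  X ⊔ Y = ⊤ ∧ X ⊓ Y ≤ I • Y ∧ IsPSD R (Submodule.comap Y.subtype X)

/-- `M` is `I`-supplemented: every submodule has an `I`-supplement in `M`. -/
def IsISupplemented {R : Type*} [Ring R] (I : Ideal R) (M : Type*)
    [AddCommGroup M] [Module R M] : Prop :=
  ∀ X : Submodule R M, ∃ Y : Submodule R M, IsISupplementOf I Y X

section Lemmas

variable {R : Type*} [Ring R]

lemma isPSD_of_subsingleton {W : Type*} [AddCommGroup W] [Module R W] [Subsingleton W]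
    (N : Submodule R W) : IsPSD R N := by
  intro Z _
  have hZ : Z = ⊤ := by
    rw [eq_top_iff]; intro x _
    rw [Subsingleton.elim x 0]; exact Z.zero_mem
  refine ⟨⊥, bot_le, ?_, hZ ▸ isCompl_bot_top⟩
  haveI : Subsingleton ↥(⊥ : Submodule R W) :=
    ⟨fun a b => Subtype.ext (Subsingleton.elim _ _)⟩
  exact Module.Projective.of_basis (Module.Basis.empty (ι := Empty) ↥(⊥ : Submodule R W))

lemma IsPSD.map {W W' : Type*} [AddCommGroup W] [Module R W] [AddCommGroup W'] [Module R W']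
    {N : Submodule R W} (h : IsPSD R N) (f : W →ₗ[R] W') : IsPSD R (N.map f) := by
  intro X' hX'
  set Z := X'.comap f with hZdef
  have hNZ : N ⊔ Z = ⊤ := by
    rw [eq_top_iff]; intro w _
    have hw : f w ∈ N.map f ⊔ X' := by rw [hX']; exact mem_top
    obtain ⟨a, ha, b, hb, hab⟩ := mem_sup.mp hw
    obtain ⟨n, hn, rfl⟩ := ha
    have hwn : w - n ∈ Z := by
      simp only [hZdef, mem_comap, map_sub]
      have : f w - f n = b := by rw [← hab]; abel
      rw [this]; exact hb
    exact mem_sup.mpr ⟨n, hn, w - n, hwn, by abel⟩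
  obtain ⟨S, hSN, hproj, hcompl⟩ := h Z hNZ
  have hSZbot : S ⊓ Z = ⊥ := disjoint_iff.mp hcompl.disjoint
  refine ⟨S.map f, Submodule.map_mono hSN, ?_, ?_, ?_⟩
  · -- projectivity
    haveI := hproj
    let g : ↥S →ₗ[R] ↥(S.map f) := f.restrict (fun x hx => Submodule.mem_map_of_mem hx)
    have hbij : Function.Bijective g := by
      constructor
      · intro a b hab
        have hval : f a.1 = f b.1 := congrArg Subtype.val hab
        have hmem : (a.1 - b.1) ∈ S ⊓ Z := by
          refine ⟨sub_mem a.2 b.2, ?_⟩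
          have : (a.1 - b.1 : W) ∈ X'.comap f := by
            rw [mem_comap, map_sub, hval, sub_self]
            exact X'.zero_mem
          rw [hZdef]; exact this
        rw [hSZbot, mem_bot, sub_eq_zero] at hmem
        exact Subtype.ext hmem
      · rintro ⟨-, n, hn, rfl⟩
        exact ⟨⟨n, hn⟩, rfl⟩
    exact Module.Projective.of_equiv (LinearEquiv.ofBijective g hbij)
  · rw [disjoint_iff, eq_bot_iff]
    rintro x ⟨hx1, hx2⟩
    obtain ⟨s, hs, rfl⟩ := hx1
    have : s ∈ S ⊓ Z := ⟨hs, hx2⟩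
    rw [hSZbot, mem_bot] at this
    rw [this, map_zero]; exact zero_mem ⊥
  · rw [codisjoint_iff, eq_top_iff, ← hX']
    refine sup_le ?_ le_sup_right
    rintro - ⟨n, hn, rfl⟩
    have hn' : n ∈ S ⊔ Z := by
      rw [codisjoint_iff.mp hcompl.codisjoint]; exact mem_top
    obtain ⟨s, hs, z, hz, hsz⟩ := mem_sup.mp hn'
    have : f n = f s + f z := by rw [← hsz, map_add]
    rw [this]
    exact add_mem (mem_sup_left (Submodule.mem_map_of_mem hs)) (mem_sup_right hz)

lemma IsPSD.of_comap_subtype {W : Type*} [AddCommGroup W] [Module R W]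
    {P₁ N : Submodule R W} (hle : N ≤ P₁)
    (h : IsPSD R (N.comap P₁.subtype)) : IsPSD R N := by
  intro Z hZ
  have hmod : N ⊔ Z ⊓ P₁ = P₁ := by
    rw [← sup_inf_assoc_of_le Z hle, hZ, top_inf_eq]
  have htop' : N.comap P₁.subtype ⊔ (Z ⊓ P₁).comap P₁.subtype = ⊤ := by
    rw [eq_top_iff]; rintro ⟨w, hw⟩ -
    have hw' : w ∈ N ⊔ Z ⊓ P₁ := by rw [hmod]; exact hw
    obtain ⟨a, ha, b, hb, hab⟩ := mem_sup.mp hw'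
    exact mem_sup.mpr ⟨⟨a, hle ha⟩, ha, ⟨b, hb.2⟩, hb, Subtype.ext hab⟩
  obtain ⟨S', hS'N, hproj, hcompl⟩ := h _ htop'
  have hS'bot : S' ⊓ (Z ⊓ P₁).comap P₁.subtype = ⊥ := disjoint_iff.mp hcompl.disjoint
  refine ⟨S'.map P₁.subtype, ?_, ?_, ?_, ?_⟩
  · refine le_trans (Submodule.map_mono hS'N) ?_
    rw [map_comap_subtype]
    exact inf_le_right
  · exact Module.Projective.of_equiv
      (Submodule.equivMapOfInjective P₁.subtype P₁.injective_subtype S')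
  · rw [disjoint_iff, eq_bot_iff]
    rintro x ⟨hx1, hx2⟩
    obtain ⟨s, hs, rfl⟩ := hx1
    have : s ∈ S' ⊓ (Z ⊓ P₁).comap P₁.subtype := ⟨hs, by exact ⟨hx2, s.2⟩⟩
    rw [hS'bot, mem_bot] at this
    rw [this]; simp
  · rw [codisjoint_iff, eq_top_iff, ← hZ]
    have hSP : S'.map P₁.subtype ⊔ Z ⊓ P₁ = P₁ := by
      have h' := congrArg (Submodule.map P₁.subtype) (codisjoint_iff.mp hcompl.codisjoint)
      rw [Submodule.map_sup, map_comap_subtype, Submodule.map_top, range_subtype,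
        inf_eq_right.mpr inf_le_right] at h'
      exact h'
    refine sup_le (le_trans hle ?_) le_sup_right
    exact le_trans (le_of_eq hSP.symm) (sup_le_sup_left inf_le_left _)

lemma projective_sup {W : Type*} [AddCommGroup W] [Module R W] {S₁ S₂ : Submodule R W}
    (h1 : Module.Projective R ↥S₁) (h2 : Module.Projective R ↥S₂)
    (hdisj : S₁ ⊓ S₂ = ⊥) : Module.Projective R ↥(S₁ ⊔ S₂) := by
  haveI := h1; haveI := h2
  let φ : (↥S₁ × ↥S₂) →ₗ[R] W := S₁.subtype.coprod S₂.subtype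
  have hinj : Function.Injective φ := by
    intro a b hab
    have h0 : (a.1 : W) + a.2 = b.1 + b.2 := hab
    have hmem : (a.1 - b.1 : W) ∈ S₁ ⊓ S₂ := by
      refine ⟨sub_mem a.1.2 b.1.2, ?_⟩
      have heq : (a.1 - b.1 : W) = b.2 - a.2 := by
        rw [sub_eq_sub_iff_add_eq_add]
        exact h0.trans (add_comm _ _)
      rw [heq]; exact sub_mem b.2.2 a.2.2
    rw [hdisj, mem_bot, sub_eq_zero] at hmem
    have h1' : a.1 = b.1 := Subtype.ext hmem
    have h2' : a.2 = b.2 := by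
      apply Subtype.ext
      have := h0
      rw [hmem] at this
      exact add_left_cancel this
    exact Prod.ext h1' h2'
  have hrange : LinearMap.range φ = S₁ ⊔ S₂ := by
    simp [φ, LinearMap.range_coprod, range_subtype]
  exact Module.Projective.of_equiv
    ((LinearEquiv.ofInjective φ hinj).trans (LinearEquiv.ofEq _ _ hrange))

lemma IsPSD.sup {W : Type*} [AddCommGroup W] [Module R W] {N₁ N₂ : Submodule R W}
    (h1 : IsPSD R N₁) (h2 : IsPSD R N₂) : IsPSD R (N₁ ⊔ N₂) := by
  intro Z hZ
  have hZ1 : N₁ ⊔ (N₂ ⊔ Z) = ⊤ := by rw [← sup_assoc]; exact hZ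
  obtain ⟨S₁, hS₁, hproj₁, hcompl₁⟩ := h1 _ hZ1
  have hZ2 : N₂ ⊔ (S₁ ⊔ Z) = ⊤ := by
    rw [sup_left_comm]
    exact codisjoint_iff.mp hcompl₁.codisjoint
  obtain ⟨S₂, hS₂, hproj₂, hcompl₂⟩ := h2 _ hZ2
  have hd1 : S₁ ⊓ (N₂ ⊔ Z) = ⊥ := disjoint_iff.mp hcompl₁.disjoint
  have hd2 : S₂ ⊓ (S₁ ⊔ Z) = ⊥ := disjoint_iff.mp hcompl₂.disjoint
  have hS₁S₂ : S₁ ⊓ S₂ = ⊥ := by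
    rw [eq_bot_iff]; rintro x ⟨hx1, hx2⟩
    have : x ∈ S₂ ⊓ (S₁ ⊔ Z) := ⟨hx2, mem_sup_left hx1⟩
    rw [hd2] at this; exact this
  refine ⟨S₁ ⊔ S₂, sup_le (le_trans hS₁ le_sup_left) (le_trans hS₂ le_sup_right),
    projective_sup hproj₁ hproj₂ hS₁S₂, ?_, ?_⟩
  · rw [disjoint_iff, eq_bot_iff]
    rintro x ⟨hx1, hxZ⟩
    obtain ⟨s₁, hs₁, s₂, hs₂, hsum⟩ := mem_sup.mp hx1
    have hs₂' : s₂ ∈ S₂ ⊓ (S₁ ⊔ Z) := by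
      refine ⟨hs₂, ?_⟩
      have : s₂ = x - s₁ := by rw [← hsum]; abel
      rw [this]
      exact sub_mem (mem_sup_right hxZ) (mem_sup_left hs₁)
    rw [hd2, mem_bot] at hs₂'
    have hx1' : x = s₁ := by rw [← hsum, hs₂', add_zero]
    have : x ∈ S₁ ⊓ (N₂ ⊔ Z) := ⟨hx1' ▸ hs₁, mem_sup_right hxZ⟩
    rw [hd1] at this; exact this
  · rw [codisjoint_iff]
    have hcd := codisjoint_iff.mp hcompl₂.codisjoint
    rw [sup_comm S₁ S₂, sup_assoc]
    exact hcd

lemma IsPSD.mono {W : Type*} [AddCommGroup W] [Module R W] {N N' : Submodule R W}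
    (hle : N' ≤ N) (h : IsPSD R N) : IsPSD R N' := by
  intro Z hZ
  have hNZ : N ⊔ Z = ⊤ := eq_top_iff.mpr (hZ ▸ sup_le_sup_right hle Z)
  obtain ⟨S, hSN, hproj, hcompl⟩ := h Z hNZ
  haveI := hproj
  set π : W →ₗ[R] ↥S := Submodule.linearProjOfIsCompl S Z hcompl with hπdef
  have hπS : ∀ s : ↥S, π s = s := fun s => Submodule.linearProjOfIsCompl_apply_left hcompl s
  have hπZ : ∀ z ∈ Z, π z = 0 := fun z hz =>
    Submodule.projectionOnto_apply_of_mem_right hcompl hz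
  have hkerπ : ∀ w, π w = 0 → w ∈ Z := by
    intro w hw
    have hw' : w ∈ S ⊔ Z := by rw [codisjoint_iff.mp hcompl.codisjoint]; exact mem_top
    obtain ⟨s, hs, z, hz, hsum⟩ := mem_sup.mp hw'
    have : π w = ⟨s, hs⟩ := by
      rw [← hsum, map_add, hπZ z hz, add_zero, hπS ⟨s, hs⟩]
    rw [hw] at this
    have hs0 : s = 0 := by
      have := congrArg Subtype.val this.symm
      exact this
    rw [← hsum, hs0, zero_add]; exact hz
  let τ : ↥N' →ₗ[R] ↥S := π.comp N'.subtype
  have hτsurj : Function.Surjective τ := by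
    intro s
    have hs' : (s : W) ∈ N' ⊔ Z := by rw [hZ]; exact mem_top
    obtain ⟨a, ha, b, hb, hab⟩ := mem_sup.mp hs'
    refine ⟨⟨a, ha⟩, ?_⟩
    have : π a + π b = s := by rw [← map_add, hab, hπS]
    have hτ : τ ⟨a, ha⟩ = π a := rfl
    rw [hτ, ← this, hπZ b hb, add_zero]
  obtain ⟨σ, hσ⟩ := Module.projective_lifting_property τ LinearMap.id hτsurj
  let j : ↥S →ₗ[R] W := N'.subtype.comp σ
  have hπj : ∀ s, π (j s) = s := by
    intro s
    have : τ (σ s) = s := by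
      have := congrArg (fun f => f s) (congrArg DFunLike.coe hσ)
      simpa using this
    exact this
  have hinj : Function.Injective j := by
    intro a b hab
    have := congrArg π hab
    rwa [hπj, hπj] at this
  refine ⟨LinearMap.range j, ?_, ?_, ?_, ?_⟩
  · rintro - ⟨s, rfl⟩
    exact (σ s).2
  · exact Module.Projective.of_equiv (LinearEquiv.ofInjective j hinj)
  · rw [disjoint_iff, eq_bot_iff]
    rintro x ⟨hx1, hx2⟩
    obtain ⟨s, rfl⟩ := hx1
    have : π (j s) = 0 := hπZ _ hx2
    rw [hπj] at this
    rw [this, map_zero]; exact zero_mem ⊥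
  · rw [codisjoint_iff, eq_top_iff, ← codisjoint_iff.mp hcompl.codisjoint]
    refine sup_le ?_ le_sup_right
    intro w hw
    have hZmem : j ⟨w, hw⟩ - w ∈ Z := by
      apply hkerπ
      rw [map_sub, hπj]
      have : π w = ⟨w, hw⟩ := hπS ⟨w, hw⟩
      rw [this, sub_self]
    have : w = j ⟨w, hw⟩ - (j ⟨w, hw⟩ - w) := by abel
    rw [this]
    exact sub_mem (mem_sup_left ⟨⟨w, hw⟩, rfl⟩) (mem_sup_right hZmem)

end Lemmas


section Main

variable {R : Type*} [Ring R] (I : Ideal R)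

lemma comap_subtype_le_smul_top {M : Type*} [AddCommGroup M] [Module R M]
    {X Y : Submodule R M} (h : X ⊓ Y ≤ I • Y) :
    X.comap Y.subtype ≤ I • (⊤ : Submodule R ↥Y) := by
  intro y hy
  have h1 : (y : M) ∈ X ⊓ Y := ⟨hy, y.2⟩
  have h2 : (y : M) ∈ I • Y := h h1
  have h3 : I • Y = Submodule.map Y.subtype (I • (⊤ : Submodule R ↥Y)) := by
    rw [Submodule.map_smul'', Submodule.map_top, range_subtype]
  rw [h3] at h2
  obtain ⟨z, hz, hzy⟩ := h2
  have hz' : z = y := Subtype.ext hzy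
  rwa [← hz']

lemma cover_to_supp {M : Type*} [AddCommGroup M] [Module R M]
    {P : Type*} [AddCommGroup P] [Module R P]
    (g : P →ₗ[R] M) (X : Submodule R M)
    (htop : X ⊔ LinearMap.range g = ⊤)
    (h1 : X.comap g ≤ I • ⊤)
    (h2 : IsPSD R (X.comap g)) :
    IsISupplementOf I (LinearMap.range g) X := by
  refine ⟨htop, ?_, ?_⟩
  · calc X ⊓ LinearMap.range g = LinearMap.range g ⊓ X := inf_comm _ _
    _ = Submodule.map g (X.comap g) := (Submodule.map_comap_eq g X).symm
    _ ≤ Submodule.map g (I • ⊤) := Submodule.map_mono h1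
    _ = I • (Submodule.map g ⊤) := Submodule.map_smul'' _ _ _
    _ = I • LinearMap.range g := by rw [Submodule.map_top]
  · have hmap : X.comap (LinearMap.range g).subtype
        = Submodule.map g.rangeRestrict (X.comap g) := by
      ext y
      simp only [mem_comap, subtype_apply, Submodule.mem_map]
      constructor
      · intro hyX
        obtain ⟨p, hp⟩ := y.2
        exact ⟨p, show g p ∈ X by rw [hp]; exact hyX, Subtype.ext hp⟩
      · rintro ⟨p, hp, rfl⟩
        simpa using hp
    rw [hmap]
    exact h2.map g.rangeRestrict

lemma main_induction {M : Type*} [AddCommGroup M] [Module R M]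
    (hR : IsISupplemented I R) (xs : List M) :
    ∀ X : Submodule R M, X ⊔ Submodule.span R {a | a ∈ xs} = ⊤ →
      ∃ Y, Y ≤ Submodule.span R {a | a ∈ xs} ∧ IsISupplementOf I Y X := by
  induction xs with
  | nil =>
    intro X hX
    have hempty : {a : M | a ∈ ([] : List M)} = ∅ := by ext a; simp
    rw [hempty, Submodule.span_empty, sup_bot_eq] at hX
    refine ⟨⊥, bot_le, ?_, ?_, ?_⟩
    · rw [hX, top_sup_eq]
    · exact le_trans inf_le_right bot_le
    · haveI : Subsingleton ↥(⊥ : Submodule R M) := ⟨fun a b => Subtype.ext (by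
        rw [(Submodule.mem_bot R).mp a.2, (Submodule.mem_bot R).mp b.2])⟩
      exact isPSD_of_subsingleton _
  | cons x tl ih =>
    intro X hX
    have hsetins : {a : M | a ∈ x :: tl} = insert x {a : M | a ∈ tl} := by
      ext a; simp [List.mem_cons]
    have hspan : Submodule.span R {a : M | a ∈ x :: tl}
        = Submodule.span R {x} ⊔ Submodule.span R {a : M | a ∈ tl} := by
      rw [hsetins, Submodule.span_insert]
    set A := X ⊔ Submodule.span R {a : M | a ∈ tl} with hAdef
    have hAtop : A ⊔ Submodule.span R {x} = ⊤ := by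
      rw [hAdef, sup_assoc, sup_comm (Submodule.span R {a : M | a ∈ tl}) (Submodule.span R {x}),
        ← hspan]
      exact hX
    set L : Submodule R R := A.comap (LinearMap.toSpanSingleton R M x) with hLdef
    obtain ⟨Y', hY'top, hY'I, hY'psd⟩ := hR L
    set g₁ : ↥Y' →ₗ[R] M := (LinearMap.toSpanSingleton R M x).comp Y'.subtype with hg₁def
    have hrange₁ : LinearMap.range g₁ ≤ Submodule.span R {x} := by
      rintro - ⟨y, rfl⟩
      exact Submodule.mem_span_singleton.mpr ⟨(y : R), rfl⟩
    have hAY₁ : A ⊔ LinearMap.range g₁ = ⊤ := by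
      rw [eq_top_iff, ← hAtop]
      refine sup_le le_sup_left ?_
      intro m hm
      obtain ⟨r, rfl⟩ := Submodule.mem_span_singleton.mp hm
      have hr : r ∈ L ⊔ Y' := by rw [hY'top]; trivial
      obtain ⟨n, hn, y, hy, hny⟩ := mem_sup.mp hr
      have hsmul : r • x = n • x + y • x := by rw [← hny, add_smul]
      rw [hsmul]
      exact add_mem (mem_sup_left hn) (mem_sup_right ⟨⟨y, hy⟩, rfl⟩)
    have hcomap₁ : A.comap g₁ = L.comap Y'.subtype := by
      ext y; exact Iff.rfl
    have hN₁I : A.comap g₁ ≤ I • (⊤ : Submodule R ↥Y') := by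
      rw [hcomap₁]; exact comap_subtype_le_smul_top I hY'I
    have hN₁psd : IsPSD R (A.comap g₁) := by rw [hcomap₁]; exact hY'psd
    have hX' : (X ⊔ LinearMap.range g₁) ⊔ Submodule.span R {a : M | a ∈ tl} = ⊤ := by
      rw [sup_right_comm, ← hAdef]
      exact hAY₁
    obtain ⟨Y₂, hY₂le, hst₂, hI₂, hpsd₂⟩ := ih (X ⊔ LinearMap.range g₁) hX'
    set g : (↥Y' × ↥Y₂) →ₗ[R] M := g₁.coprod Y₂.subtype with hgdef
    have hrangeg : LinearMap.range g = LinearMap.range g₁ ⊔ Y₂ := by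
      rw [hgdef, LinearMap.range_coprod, range_subtype]
    have hYle : LinearMap.range g ≤ Submodule.span R {a : M | a ∈ x :: tl} := by
      rw [hrangeg, hspan]
      exact sup_le (le_trans hrange₁ le_sup_left) (le_trans hY₂le le_sup_right)
    have hgtop : X ⊔ LinearMap.range g = ⊤ := by
      rw [hrangeg, ← sup_assoc]
      exact hst₂
    have hcomapg : X.comap g ≤
        Submodule.map (LinearMap.inl R ↥Y' ↥Y₂) (A.comap g₁)
        ⊔ Submodule.map (LinearMap.inr R ↥Y' ↥Y₂)
            ((X ⊔ LinearMap.range g₁).comap Y₂.subtype) := by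
      rintro ⟨p₁, p₂⟩ hp
      have hp' : g₁ p₁ + (p₂ : M) ∈ X := by simpa [hgdef] using hp
      have hgp1 : g₁ p₁ ∈ A := by
        have h1 : g₁ p₁ = (g₁ p₁ + (p₂ : M)) - (p₂ : M) := by abel
        rw [h1, hAdef]
        exact sub_mem (mem_sup_left hp') (mem_sup_right (hY₂le p₂.2))
      have hp2 : (p₂ : M) ∈ X ⊔ LinearMap.range g₁ := by
        have h1 : (p₂ : M) = (g₁ p₁ + (p₂ : M)) - g₁ p₁ := by abel
        rw [h1]
        exact sub_mem (mem_sup_left hp') (mem_sup_right ⟨p₁, rfl⟩)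
      have hdecomp : (p₁, p₂) = (LinearMap.inl R ↥Y' ↥Y₂) p₁ + (LinearMap.inr R ↥Y' ↥Y₂) p₂ := by
        simp
      rw [hdecomp]
      exact add_mem (mem_sup_left ⟨p₁, hgp1, rfl⟩) (mem_sup_right ⟨p₂, hp2, rfl⟩)
    have hIg : X.comap g ≤ I • (⊤ : Submodule R (↥Y' × ↥Y₂)) := by
      refine le_trans hcomapg (sup_le ?_ ?_)
      · refine le_trans (Submodule.map_mono hN₁I) ?_
        rw [Submodule.map_smul'']
        exact Submodule.smul_mono le_rfl le_top
      · refine le_trans (Submodule.map_mono (comap_subtype_le_smul_top I hI₂)) ?_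
        rw [Submodule.map_smul'']
        exact Submodule.smul_mono le_rfl le_top
    have hpsdg : IsPSD R (X.comap g) := by
      refine IsPSD.mono hcomapg ?_
      exact (hN₁psd.map _).sup (hpsd₂.map _)
    exact ⟨LinearMap.range g, hYle, cover_to_supp I g X hgtop hIg hpsdg⟩

end Main


theorem stmt17 {R : Type*} [Ring R] (I : Ideal R)
    (hR : IsISupplemented I R)
    (hpsd : ∀ n : ℕ, ∀ N : Submodule R (Fin n → R),
      N ≤ I • (⊤ : Submodule R (Fin n → R)) → IsPSD R N) :
    ∀ (M : Type*) [AddCommGroup M] [Module R M], Module.Finite R M →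
      IsISupplemented I M := by
  intro M _ _ hfin
  haveI := hfin
  intro X
  obtain ⟨n, s, hs⟩ := Module.Finite.exists_fin (R := R) (M := M)
  have hset : {a : M | a ∈ List.ofFn s} = Set.range s := by
    ext a; simp [List.mem_ofFn]
  have hsp : X ⊔ Submodule.span R {a : M | a ∈ List.ofFn s} = ⊤ := by
    rw [hset, hs, sup_top_eq]
  obtain ⟨Y, -, hY⟩ := main_induction I hR (List.ofFn s) X hsp
  exact ⟨Y, hY⟩
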